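/- Let a, b ∈ ℝ, let z₀ ∈ ℂ with z₀ ≠ 0, let w ∈ ℂ with |w| = 1, and let c > 0. If for every t ≥ 0 one has Re(conj(w)·exp((a + i·b)·t)·z₀) ≥ c·|exp((a + i·b)·t)·z₀|, then b = 0. -/

import Mathlib

open Complex

/-- A trajectory `t ↦ exp((a + i b) t) * z₀` of a linear combination of the
focus-focus Hamiltonian vector fields which stays, for all positive times, in a
fixed convex sector `{z | Re (conj w * z) ≥ c * |z|}` (with `|w| = 1`, `c > 0`)
must be radial, i.e. `b = 0`. -/
theorem sector_confined_trajectory_is_radial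
    (a b : ℝ) (z₀ : ℂ) (hz₀ : z₀ ≠ 0) (w : ℂ) (hw : ‖w‖ = 1)
    (c : ℝ) (hc : 0 < c)
    (hsector : ∀ t : ℝ, 0 ≤ t →
      c * ‖Complex.exp ((a + b * I) * t) * z₀‖ ≤
        ((starRingEnd ℂ) w * (Complex.exp ((a + b * I) * t) * z₀)).re) :
    b = 0 := by
  by_contra hb
  set u : ℂ := (starRingEnd ℂ) w * z₀ with hu_def
  have hw0 : w ≠ 0 := by
    intro h; rw [h] at hw; simp at hw
  have hu : u ≠ 0 := mul_ne_zero (by simpa using hw0) hz₀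
  -- key inequality after dividing by the radial factor
  have key : ∀ t : ℝ, 0 ≤ t → c * ‖z₀‖ ≤ (u * Complex.exp (↑(b * t) * I)).re := by
    intro t ht
    have h := hsector t ht
    have hexp : Complex.exp ((↑a + ↑b * I) * ↑t)
        = (↑(Real.exp (a * t)) : ℂ) * Complex.exp (↑(b * t) * I) := by
      rw [show ((↑a + ↑b * I) * ↑t : ℂ) = ↑(a * t) + ↑(b * t) * I by push_cast; ring,
        Complex.exp_add, Complex.ofReal_exp]
    rw [hexp] at h
    have habs : ‖(↑(Real.exp (a * t)) : ℂ) * Complex.exp (↑(b * t) * I) * z₀‖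
        = Real.exp (a * t) * ‖z₀‖ := by
      rw [norm_mul, norm_mul, Complex.norm_real, Real.norm_eq_abs, Complex.norm_exp_ofReal_mul_I,
        abs_of_pos (Real.exp_pos _)]
      ring
    have hre : ((starRingEnd ℂ) w * ((↑(Real.exp (a * t)) : ℂ) * Complex.exp (↑(b * t) * I) * z₀)).re
        = Real.exp (a * t) * (u * Complex.exp (↑(b * t) * I)).re := by
      have : (starRingEnd ℂ) w * ((↑(Real.exp (a * t)) : ℂ) * Complex.exp (↑(b * t) * I) * z₀)
          = (↑(Real.exp (a * t)) : ℂ) * (u * Complex.exp (↑(b * t) * I)) := by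
        rw [hu_def]; ring
      rw [this, Complex.re_ofReal_mul]
    rw [habs, hre] at h
    have hepos : (0 : ℝ) < Real.exp (a * t) := Real.exp_pos _
    have h' : Real.exp (a * t) * (c * ‖z₀‖)
        ≤ Real.exp (a * t) * (u * Complex.exp (↑(b * t) * I)).re := by
      nlinarith [h]
    exact (mul_le_mul_iff_right₀ hepos).mp h'
  -- choose a time at which the trajectory points in direction -|u|
  set s : ℝ := if 0 < b then Real.pi else -Real.pi with hs_def
  set t : ℝ := (s - Complex.arg u) / b with ht_def
  have ht : 0 ≤ t := by
    rcases lt_or_gt_of_ne hb with hneg | hpos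
    · have hs : s = -Real.pi := by simp [hs_def, not_lt.mpr hneg.le]
      have : s - Complex.arg u ≤ 0 := by
        rw [hs]; linarith [Complex.neg_pi_lt_arg u]
      have := div_nonneg (neg_nonneg.mpr this) (neg_nonneg.mpr hneg.le)
      rwa [neg_div_neg_eq] at this
    · have hs : s = Real.pi := by simp [hs_def, hpos]
      have : 0 ≤ s - Complex.arg u := by
        rw [hs]; linarith [Complex.arg_le_pi u]
      exact div_nonneg this hpos.le
  have hbt : b * t = s - Complex.arg u := by
    rw [ht_def]; field_simp
  have hval : u * Complex.exp (↑(b * t) * I) = -((‖u‖ : ℝ) : ℂ) := by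
    obtain ⟨θ, hθ, hA⟩ : ∃ θ : ℝ, θ = Complex.arg u ∧
        (↑‖u‖ : ℂ) * Complex.exp (↑θ * I) = u :=
      ⟨Complex.arg u, rfl, Complex.norm_mul_exp_arg_mul_I u⟩
    rw [hbt, ← hθ]
    conv_lhs => rw [← hA]
    rw [mul_assoc, ← Complex.exp_add]
    have harg : (↑θ * I + ↑(s - θ) * I : ℂ) = ↑s * I := by
      push_cast; ring
    rw [harg]
    have hexp_s : Complex.exp (↑s * I) = -1 := by
      rcases lt_or_gt_of_ne hb with hneg | hpos
      · have : s = -Real.pi := by simp [hs_def, not_lt.mpr hneg.le]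
        rw [this]; push_cast
        rw [show ((-↑Real.pi : ℂ) * I) = -(↑Real.pi * I) by ring, Complex.exp_neg,
          Complex.exp_pi_mul_I]
        norm_num
      · have : s = Real.pi := by simp [hs_def, hpos]
        rw [this, Complex.exp_pi_mul_I]
    rw [hexp_s]
    ring
  have h := key t ht
  rw [hval] at h
  simp only [Complex.neg_re, Complex.ofReal_re] at h
  have h1 : 0 < c * ‖z₀‖ :=
    mul_pos hc (by simpa using hz₀)
  have h2 : 0 < ‖u‖ := by simpa using hu
  linarith
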